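/- Let M, N : I² → I be means with M ≤ N satisfying |M(x,y)−N(x,y)| < |x−y| for x ≠ y, and suppose additionally that M and N are continuous. Then Lo = Up, i.e. the orbit sequences (xₙ) and (yₙ) converge to a common limit for all x,y ∈ I, and this common limit K(x,y) is the unique (M,N)-invariant mean, which is moreover continuous. -/

import Mathlib

def IsMean (I : Set ℝ) (M : ℝ → ℝ → ℝ) : Prop :=
  ∀ x ∈ I, ∀ y ∈ I, M x y ∈ I ∧ min x y ≤ M x y ∧ M x y ≤ max x y

def IsInvariantMean (I : Set ℝ) (M N K : ℝ → ℝ → ℝ) : Prop :=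
  ∀ x ∈ I, ∀ y ∈ I, K x y = K (M x y) (N x y)

def orbit (M N : ℝ → ℝ → ℝ) (x y : ℝ) : ℕ → ℝ × ℝ
  | 0 => (x, y)
  | n + 1 => (M (orbit M N x y n).1 (orbit M N x y n).2,
      N (orbit M N x y n).1 (orbit M N x y n).2)

noncomputable def Lo (M N : ℝ → ℝ → ℝ) (x y : ℝ) : ℝ :=
  Filter.liminf (fun n => min (orbit M N x y n).1 (orbit M N x y n).2) Filter.atTop

noncomputable def Up (M N : ℝ → ℝ → ℝ) (x y : ℝ) : ℝ :=
  Filter.limsup (fun n => max (orbit M N x y n).1 (orbit M N x y n).2) Filter.atTop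

section Aux
set_option maxHeartbeats 1000000

open Filter Topology

variable {I : Set ℝ} {M N : ℝ → ℝ → ℝ}

lemma orbit_mem (hM : IsMean I M) (hN : IsMean I N) {x y : ℝ} (hx : x ∈ I) (hy : y ∈ I) :
    ∀ n, (orbit M N x y n).1 ∈ I ∧ (orbit M N x y n).2 ∈ I := by
  intro n
  induction n with
  | zero => exact ⟨hx, hy⟩
  | succ n ih => exact ⟨(hM _ ih.1 _ ih.2).1, (hN _ ih.1 _ ih.2).1⟩

lemma min_mono (hM : IsMean I M) (hN : IsMean I N) {x y : ℝ} (hx : x ∈ I) (hy : y ∈ I) :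
    Monotone (fun n => min (orbit M N x y n).1 (orbit M N x y n).2) := by
  apply monotone_nat_of_le_succ
  intro n
  obtain ⟨h1, h2⟩ := orbit_mem hM hN hx hy n
  exact le_min (hM _ h1 _ h2).2.1 (hN _ h1 _ h2).2.1

lemma max_anti (hM : IsMean I M) (hN : IsMean I N) {x y : ℝ} (hx : x ∈ I) (hy : y ∈ I) :
    Antitone (fun n => max (orbit M N x y n).1 (orbit M N x y n).2) := by
  apply antitone_nat_of_succ_le
  intro n
  obtain ⟨h1, h2⟩ := orbit_mem hM hN hx hy n
  exact max_le (hM _ h1 _ h2).2.2 (hN _ h1 _ h2).2.2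

lemma min_le_max_orbit (x y : ℝ) (n : ℕ) :
    min (orbit M N x y n).1 (orbit M N x y n).2 ≤ max (orbit M N x y n).1 (orbit M N x y n).2 :=
  min_le_max

lemma tendsto_min_Lo (hM : IsMean I M) (hN : IsMean I N) {x y : ℝ} (hx : x ∈ I) (hy : y ∈ I) :
    Tendsto (fun n => min (orbit M N x y n).1 (orbit M N x y n).2) atTop (𝓝 (Lo M N x y)) := by
  have hb : BddAbove (Set.range (fun n => min (orbit M N x y n).1 (orbit M N x y n).2)) := by
    refine ⟨max x y, ?_⟩
    rintro _ ⟨n, rfl⟩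
    exact le_trans (min_le_max_orbit x y n) (max_anti hM hN hx hy (Nat.zero_le n))
  have h := tendsto_atTop_ciSup (min_mono hM hN hx hy) hb
  rwa [Lo, h.liminf_eq]

lemma tendsto_max_Up (hM : IsMean I M) (hN : IsMean I N) {x y : ℝ} (hx : x ∈ I) (hy : y ∈ I) :
    Tendsto (fun n => max (orbit M N x y n).1 (orbit M N x y n).2) atTop (𝓝 (Up M N x y)) := by
  have hb : BddBelow (Set.range (fun n => max (orbit M N x y n).1 (orbit M N x y n).2)) := by
    refine ⟨min x y, ?_⟩
    rintro _ ⟨n, rfl⟩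
    exact le_trans (min_mono hM hN hx hy (Nat.zero_le n)) (min_le_max_orbit x y n)
  have h := tendsto_atTop_ciInf (max_anti hM hN hx hy) hb
  rwa [Up, h.limsup_eq]

lemma orbit_mem_Icc (hM : IsMean I M) (hN : IsMean I N) {x y : ℝ} (hx : x ∈ I) (hy : y ∈ I)
    (n : ℕ) : (orbit M N x y n).1 ∈ Set.Icc (min x y) (max x y) ∧
      (orbit M N x y n).2 ∈ Set.Icc (min x y) (max x y) := by
  have h1 := min_mono hM hN hx hy (Nat.zero_le n)
  have h2 := max_anti hM hN hx hy (Nat.zero_le n)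
  simp only [orbit] at h1 h2
  constructor
  · exact ⟨le_trans h1 (min_le_left _ _), le_trans (le_max_left _ _) h2⟩
  · exact ⟨le_trans h1 (min_le_right _ _), le_trans (le_max_right _ _) h2⟩

lemma lo_eq_up (hI : I.OrdConnected) (hM : IsMean I M) (hN : IsMean I N)
    (hMcont : ContinuousOn (fun p : ℝ × ℝ => M p.1 p.2) (I ×ˢ I))
    (hNcont : ContinuousOn (fun p : ℝ × ℝ => N p.1 p.2) (I ×ˢ I))
    (hcontr : ∀ x ∈ I, ∀ y ∈ I, x ≠ y → |M x y - N x y| < |x - y|)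
    {x y : ℝ} (hx : x ∈ I) (hy : y ∈ I) : Lo M N x y = Up M N x y := by
  set u := fun n => (orbit M N x y n).1 with hu
  set v := fun n => (orbit M N x y n).2 with hv
  have hIcc : Set.Icc (min x y) (max x y) ⊆ I := by
    apply hI.out
    · rcases le_total x y with h | h
      · rwa [min_eq_left h]
      · rwa [min_eq_right h]
    · rcases le_total x y with h | h
      · rwa [max_eq_right h]
      · rwa [max_eq_left h]
  obtain ⟨a, ha, φ, hφ, hφa⟩ := (isCompact_Icc (a := min x y) (b := max x y)).tendsto_subseq
    (fun n => (orbit_mem_Icc hM hN hx hy n).1)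
  obtain ⟨b, hb, ψ, hψ, hψb⟩ := (isCompact_Icc (a := min x y) (b := max x y)).tendsto_subseq
    (x := fun n => v (φ n)) (fun n => (orbit_mem_Icc hM hN hx hy (φ n)).2)
  have hχ : StrictMono (φ ∘ ψ) := hφ.comp hψ
  have hua : Tendsto (fun k => u (φ (ψ k))) atTop (𝓝 a) := hφa.comp hψ.tendsto_atTop
  have hvb : Tendsto (fun k => v (φ (ψ k))) atTop (𝓝 b) := hψb
  have hmin := tendsto_min_Lo hM hN hx hy
  have hmax := tendsto_max_Up hM hN hx hy
  have hminab : min a b = Lo M N x y := by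
    have h1 : Tendsto (fun k => min (u (φ (ψ k))) (v (φ (ψ k)))) atTop (𝓝 (min a b)) :=
      hua.min hvb
    have h2 : Tendsto (fun k => min (u (φ (ψ k))) (v (φ (ψ k)))) atTop (𝓝 (Lo M N x y)) :=
      hmin.comp hχ.tendsto_atTop
    exact tendsto_nhds_unique h1 h2
  have hmaxab : max a b = Up M N x y := by
    have h1 : Tendsto (fun k => max (u (φ (ψ k))) (v (φ (ψ k)))) atTop (𝓝 (max a b)) :=
      hua.max hvb
    have h2 : Tendsto (fun k => max (u (φ (ψ k))) (v (φ (ψ k)))) atTop (𝓝 (Up M N x y)) :=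
      hmax.comp hχ.tendsto_atTop
    exact tendsto_nhds_unique h1 h2
  have haI : a ∈ I := hIcc ha
  have hbI : b ∈ I := hIcc hb
  have hpair : Tendsto (fun k => ((u (φ (ψ k)), v (φ (ψ k))) : ℝ × ℝ))
      atTop (𝓝[I ×ˢ I] (a, b)) := by
    apply tendsto_nhdsWithin_of_tendsto_nhds_of_eventually_within
    · exact hua.prodMk_nhds hvb
    · filter_upwards with k
      exact Set.mk_mem_prod (orbit_mem hM hN hx hy _).1 (orbit_mem hM hN hx hy _).2
  have hMt : Tendsto (fun k => M (u (φ (ψ k))) (v (φ (ψ k)))) atTop (𝓝 (M a b)) :=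
    (hMcont (a, b) (Set.mk_mem_prod haI hbI)).tendsto.comp hpair
  have hNt : Tendsto (fun k => N (u (φ (ψ k))) (v (φ (ψ k)))) atTop (𝓝 (N a b)) :=
    (hNcont (a, b) (Set.mk_mem_prod haI hbI)).tendsto.comp hpair
  -- shifted orbit values
  have hshift1 : ∀ k, u (φ (ψ k) + 1) = M (u (φ (ψ k))) (v (φ (ψ k))) := fun k => rfl
  have hshift2 : ∀ k, v (φ (ψ k) + 1) = N (u (φ (ψ k))) (v (φ (ψ k))) := fun k => rfl
  have hχ1 : Tendsto (fun k => φ (ψ k) + 1) atTop atTop :=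
    tendsto_atTop_mono (fun k => Nat.le_succ _) hχ.tendsto_atTop
  have hmin2 : Tendsto (fun k => min (u (φ (ψ k) + 1)) (v (φ (ψ k) + 1))) atTop
      (𝓝 (Lo M N x y)) := hmin.comp hχ1
  have hmax2 : Tendsto (fun k => max (u (φ (ψ k) + 1)) (v (φ (ψ k) + 1))) atTop
      (𝓝 (Up M N x y)) := hmax.comp hχ1
  have hminMN : min (M a b) (N a b) = Lo M N x y := by
    refine tendsto_nhds_unique (hMt.min hNt) ?_
    convert hmin2 using 2 with k
    exact (congrArg₂ min (hshift1 k) (hshift2 k)).symm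
  have hmaxMN : max (M a b) (N a b) = Up M N x y := by
    refine tendsto_nhds_unique (hMt.max hNt) ?_
    convert hmax2 using 2 with k
    exact (congrArg₂ max (hshift1 k) (hshift2 k)).symm
  by_contra hne
  have hab : a ≠ b := by
    intro h
    apply hne
    rw [← hminab, ← hmaxab, h, min_self, max_self]
  have := hcontr a haI b hbI hab
  rw [abs_sub_comm, ← max_sub_min_eq_abs, abs_sub_comm, ← max_sub_min_eq_abs,
    hminab, hmaxab, hminMN, hmaxMN] at this
  exact lt_irrefl _ this

lemma lo_le_up (hM : IsMean I M) (hN : IsMean I N) {x y : ℝ} (hx : x ∈ I) (hy : y ∈ I) :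
    Lo M N x y ≤ Up M N x y :=
  le_of_tendsto_of_tendsto (tendsto_min_Lo hM hN hx hy) (tendsto_max_Up hM hN hx hy)
    (Filter.Eventually.of_forall fun n => min_le_max_orbit x y n)

lemma min_le_lo (hM : IsMean I M) (hN : IsMean I N) {x y : ℝ} (hx : x ∈ I) (hy : y ∈ I)
    (n : ℕ) : min (orbit M N x y n).1 (orbit M N x y n).2 ≤ Lo M N x y :=
  (min_mono hM hN hx hy).ge_of_tendsto (tendsto_min_Lo hM hN hx hy) n

lemma up_le_max (hM : IsMean I M) (hN : IsMean I N) {x y : ℝ} (hx : x ∈ I) (hy : y ∈ I)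
    (n : ℕ) : Up M N x y ≤ max (orbit M N x y n).1 (orbit M N x y n).2 :=
  (max_anti hM hN hx hy).le_of_tendsto (tendsto_max_Up hM hN hx hy) n

lemma tendsto_orbit (hI : I.OrdConnected) (hM : IsMean I M) (hN : IsMean I N)
    (hMcont : ContinuousOn (fun p : ℝ × ℝ => M p.1 p.2) (I ×ˢ I))
    (hNcont : ContinuousOn (fun p : ℝ × ℝ => N p.1 p.2) (I ×ˢ I))
    (hcontr : ∀ x ∈ I, ∀ y ∈ I, x ≠ y → |M x y - N x y| < |x - y|)
    {x y : ℝ} (hx : x ∈ I) (hy : y ∈ I) :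
    Tendsto (fun n => (orbit M N x y n).1) atTop (𝓝 (Lo M N x y)) ∧
    Tendsto (fun n => (orbit M N x y n).2) atTop (𝓝 (Lo M N x y)) := by
  have heq := lo_eq_up hI hM hN hMcont hNcont hcontr hx hy
  have hmin := tendsto_min_Lo hM hN hx hy
  have hmax := tendsto_max_Up hM hN hx hy
  rw [← heq] at hmax
  constructor
  · exact tendsto_of_tendsto_of_tendsto_of_le_of_le hmin hmax
      (fun n => min_le_left _ _) (fun n => le_max_left _ _)
  · exact tendsto_of_tendsto_of_tendsto_of_le_of_le hmin hmax
      (fun n => min_le_right _ _) (fun n => le_max_right _ _)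

lemma orbit_shift (x y : ℝ) (n : ℕ) :
    orbit M N x y (n + 1) = orbit M N (M x y) (N x y) n := by
  induction n with
  | zero => rfl
  | succ n ih =>
    conv_lhs => rw [orbit]
    rw [ih]
    rfl

lemma lo_mem_Icc (hM : IsMean I M) (hN : IsMean I N) {x y : ℝ} (hx : x ∈ I) (hy : y ∈ I) :
    Lo M N x y ∈ Set.Icc (min x y) (max x y) := by
  constructor
  · exact min_le_lo hM hN hx hy 0
  · exact le_trans (lo_le_up hM hN hx hy) (up_le_max hM hN hx hy 0)

lemma lo_isMean (hI : I.OrdConnected) (hM : IsMean I M) (hN : IsMean I N) :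
    IsMean I (Lo M N) := by
  intro x hx y hy
  have h := lo_mem_Icc hM hN hx hy
  have hIcc : Set.Icc (min x y) (max x y) ⊆ I := by
    apply hI.out
    · rcases le_total x y with h | h
      · rwa [min_eq_left h]
      · rwa [min_eq_right h]
    · rcases le_total x y with h | h
      · rwa [max_eq_right h]
      · rwa [max_eq_left h]
  exact ⟨hIcc h, h.1, h.2⟩

lemma lo_invariant (hI : I.OrdConnected) (hM : IsMean I M) (hN : IsMean I N)
    (hMcont : ContinuousOn (fun p : ℝ × ℝ => M p.1 p.2) (I ×ˢ I))
    (hNcont : ContinuousOn (fun p : ℝ × ℝ => N p.1 p.2) (I ×ˢ I))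
    (hcontr : ∀ x ∈ I, ∀ y ∈ I, x ≠ y → |M x y - N x y| < |x - y|) :
    ∀ x ∈ I, ∀ y ∈ I, Lo M N x y = Lo M N (M x y) (N x y) := by
  intro x hx y hy
  have hMxy : M x y ∈ I := (hM x hx y hy).1
  have hNxy : N x y ∈ I := (hN x hx y hy).1
  have h1 : Tendsto (fun n => (orbit M N (M x y) (N x y) n).1) atTop
      (𝓝 (Lo M N (M x y) (N x y))) :=
    (tendsto_orbit hI hM hN hMcont hNcont hcontr hMxy hNxy).1
  have h2 : Tendsto (fun n => (orbit M N x y (n + 1)).1) atTop (𝓝 (Lo M N x y)) :=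
    (tendsto_orbit hI hM hN hMcont hNcont hcontr hx hy).1.comp
      (tendsto_add_atTop_nat 1)
  have h3 : (fun n => (orbit M N x y (n + 1)).1) =
      fun n => (orbit M N (M x y) (N x y) n).1 := by
    funext n; rw [orbit_shift]
  rw [h3] at h2
  exact tendsto_nhds_unique h2 h1

lemma lo_unique (hI : I.OrdConnected) (hM : IsMean I M) (hN : IsMean I N)
    (hMcont : ContinuousOn (fun p : ℝ × ℝ => M p.1 p.2) (I ×ˢ I))
    (hNcont : ContinuousOn (fun p : ℝ × ℝ => N p.1 p.2) (I ×ˢ I))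
    (hcontr : ∀ x ∈ I, ∀ y ∈ I, x ≠ y → |M x y - N x y| < |x - y|)
    {x y : ℝ} (hx : x ∈ I) (hy : y ∈ I)
    (K : ℝ → ℝ → ℝ) (hK : IsMean I K) (hKinv : IsInvariantMean I M N K) :
    K x y = Lo M N x y := by
  have horb : ∀ n, K x y = K (orbit M N x y n).1 (orbit M N x y n).2 := by
    intro n
    induction n with
    | zero => rfl
    | succ n ih =>
      rw [ih]
      exact hKinv _ (orbit_mem hM hN hx hy n).1 _ (orbit_mem hM hN hx hy n).2
  have hlow : ∀ n, min (orbit M N x y n).1 (orbit M N x y n).2 ≤ K x y := by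
    intro n
    rw [horb n]
    exact (hK _ (orbit_mem hM hN hx hy n).1 _ (orbit_mem hM hN hx hy n).2).2.1
  have hupp : ∀ n, K x y ≤ max (orbit M N x y n).1 (orbit M N x y n).2 := by
    intro n
    rw [horb n]
    exact (hK _ (orbit_mem hM hN hx hy n).1 _ (orbit_mem hM hN hx hy n).2).2.2
  have h1 : Lo M N x y ≤ K x y :=
    le_of_tendsto (tendsto_min_Lo hM hN hx hy) (Filter.Eventually.of_forall hlow)
  have h2 : K x y ≤ Up M N x y :=
    ge_of_tendsto (tendsto_max_Up hM hN hx hy) (Filter.Eventually.of_forall hupp)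
  have heq := lo_eq_up hI hM hN hMcont hNcont hcontr hx hy
  linarith

lemma orbit_contOn (hM : IsMean I M) (hN : IsMean I N)
    (hMcont : ContinuousOn (fun p : ℝ × ℝ => M p.1 p.2) (I ×ˢ I))
    (hNcont : ContinuousOn (fun p : ℝ × ℝ => N p.1 p.2) (I ×ˢ I)) (n : ℕ) :
    ContinuousOn (fun p : ℝ × ℝ => orbit M N p.1 p.2 n) (I ×ˢ I) ∧
    Set.MapsTo (fun p : ℝ × ℝ => orbit M N p.1 p.2 n) (I ×ˢ I) (I ×ˢ I) := by
  induction n with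
  | zero =>
    constructor
    · exact continuousOn_id.congr (fun p _ => rfl)
    · intro p hp; exact hp
  | succ n ih =>
    have hc1 : ContinuousOn
        (fun p : ℝ × ℝ => M (orbit M N p.1 p.2 n).1 (orbit M N p.1 p.2 n).2) (I ×ˢ I) :=
      hMcont.comp ih.1 ih.2
    have hc2 : ContinuousOn
        (fun p : ℝ × ℝ => N (orbit M N p.1 p.2 n).1 (orbit M N p.1 p.2 n).2) (I ×ˢ I) :=
      hNcont.comp ih.1 ih.2
    constructor
    · exact hc1.prodMk hc2
    · intro p hp
      obtain ⟨h1, h2⟩ := ih.2 hp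
      exact Set.mk_mem_prod (hM _ h1 _ h2).1 (hN _ h1 _ h2).1

lemma lo_contOn (hI : I.OrdConnected) (hM : IsMean I M) (hN : IsMean I N)
    (hMcont : ContinuousOn (fun p : ℝ × ℝ => M p.1 p.2) (I ×ˢ I))
    (hNcont : ContinuousOn (fun p : ℝ × ℝ => N p.1 p.2) (I ×ˢ I))
    (hcontr : ∀ x ∈ I, ∀ y ∈ I, x ≠ y → |M x y - N x y| < |x - y|) :
    ContinuousOn (fun p : ℝ × ℝ => Lo M N p.1 p.2) (I ×ˢ I) := by
  have mc : ∀ n, ContinuousOn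
      (fun p : ℝ × ℝ => min (orbit M N p.1 p.2 n).1 (orbit M N p.1 p.2 n).2) (I ×ˢ I) :=
    fun n => continuous_min.comp_continuousOn
      (((orbit_contOn hM hN hMcont hNcont n).1.fst).prodMk
        ((orbit_contOn hM hN hMcont hNcont n).1.snd))
  have Mc : ∀ n, ContinuousOn
      (fun p : ℝ × ℝ => max (orbit M N p.1 p.2 n).1 (orbit M N p.1 p.2 n).2) (I ×ˢ I) :=
    fun n => continuous_max.comp_continuousOn
      (((orbit_contOn hM hN hMcont hNcont n).1.fst).prodMk
        ((orbit_contOn hM hN hMcont hNcont n).1.snd))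
  intro p hp
  obtain ⟨hp1, hp2⟩ := hp
  rw [Metric.continuousWithinAt_iff]
  intro ε hε
  have hε4 : (0 : ℝ) < ε / 4 := by linarith
  have hminp := tendsto_min_Lo hM hN hp1 hp2
  have hmaxp := tendsto_max_Up hM hN hp1 hp2
  rw [← lo_eq_up hI hM hN hMcont hNcont hcontr hp1 hp2] at hmaxp
  obtain ⟨n1, h1⟩ := Metric.tendsto_atTop.mp hminp (ε / 4) hε4
  obtain ⟨n2, h2⟩ := Metric.tendsto_atTop.mp hmaxp (ε / 4) hε4
  set n := max n1 n2 with hn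
  have h1' := h1 n (le_max_left _ _)
  have h2' := h2 n (le_max_right _ _)
  obtain ⟨δ1, hδ1, H1⟩ := Metric.continuousWithinAt_iff.mp (mc n p ⟨hp1, hp2⟩) (ε / 4) hε4
  obtain ⟨δ2, hδ2, H2⟩ := Metric.continuousWithinAt_iff.mp (Mc n p ⟨hp1, hp2⟩) (ε / 4) hε4
  refine ⟨min δ1 δ2, lt_min hδ1 hδ2, ?_⟩
  intro q hq hdq
  obtain ⟨hq1, hq2⟩ := hq
  have hA := H1 ⟨hq1, hq2⟩ (lt_of_lt_of_le hdq (min_le_left _ _))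
  have hB := H2 ⟨hq1, hq2⟩ (lt_of_lt_of_le hdq (min_le_right _ _))
  have hlow : min (orbit M N q.1 q.2 n).1 (orbit M N q.1 q.2 n).2 ≤ Lo M N q.1 q.2 :=
    min_le_lo hM hN hq1 hq2 n
  have hupp : Lo M N q.1 q.2 ≤ max (orbit M N q.1 q.2 n).1 (orbit M N q.1 q.2 n).2 :=
    le_trans (lo_le_up hM hN hq1 hq2) (up_le_max hM hN hq1 hq2 n)
  rw [Real.dist_eq] at h1' h2' hA hB ⊢
  rw [abs_lt] at h1' h2' hA hB
  rw [abs_lt]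
  constructor
  · linarith [hlow, hA.1, h1'.1]
  · linarith [hupp, hB.2, h2'.2]

end Aux

set_option maxHeartbeats 1000000 in
/-- the classical Borwein–Borwein/Matkowski theorem: if `M`, `N` are
continuous means with `|M(x,y) − N(x,y)| < |x − y|` for `x ≠ y`, then both orbit
sequences converge to the common limit `Lo(x,y) = Up(x,y)`, which is the unique
`(M,N)`-invariant mean, and it is continuous. -/
theorem stmt19 (I : Set ℝ) (hI : I.OrdConnected) (M N : ℝ → ℝ → ℝ)
    (hM : IsMean I M) (hN : IsMean I N)
    (hMcont : ContinuousOn (fun p : ℝ × ℝ => M p.1 p.2) (I ×ˢ I))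
    (hNcont : ContinuousOn (fun p : ℝ × ℝ => N p.1 p.2) (I ×ˢ I))
    (hcontr : ∀ x ∈ I, ∀ y ∈ I, x ≠ y → |M x y - N x y| < |x - y|) :
    (∀ x ∈ I, ∀ y ∈ I,
      Lo M N x y = Up M N x y ∧
      Filter.Tendsto (fun n => (orbit M N x y n).1) Filter.atTop (nhds (Lo M N x y)) ∧
      Filter.Tendsto (fun n => (orbit M N x y n).2) Filter.atTop (nhds (Lo M N x y))) ∧
    IsMean I (Lo M N) ∧ IsInvariantMean I M N (Lo M N) ∧
    ContinuousOn (fun p : ℝ × ℝ => Lo M N p.1 p.2) (I ×ˢ I) ∧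
    (∀ K : ℝ → ℝ → ℝ, IsMean I K → IsInvariantMean I M N K →
      ∀ x ∈ I, ∀ y ∈ I, K x y = Lo M N x y) := by
  refine ⟨?_, lo_isMean hI hM hN, ?_, lo_contOn hI hM hN hMcont hNcont hcontr, ?_⟩
  · intro x hx y hy
    exact ⟨lo_eq_up hI hM hN hMcont hNcont hcontr hx hy,
      (tendsto_orbit hI hM hN hMcont hNcont hcontr hx hy).1,
      (tendsto_orbit hI hM hN hMcont hNcont hcontr hx hy).2⟩
  · exact lo_invariant hI hM hN hMcont hNcont hcontr
  · intro K hK hKinv x hx y hy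
    exact lo_unique hI hM hN hMcont hNcont hcontr hx hy K hK hKinv
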